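/- arXiv:2409.14502 — 4 statements merged into one kernel-verified Lean document; each statement's English description precedes it below -/
import Mathlib

section
/- For all nonnegative integers m and n, the alternating sum ∑_{j=0}^{⌊m/2⌋} (-1)^j * C(m-j, j) * Cat(n-j) equals C(2n-m, n) if m > 2n, and equals C(2n-m, n) * (m+1)/(n+1) if m ≤ 2n, where Cat(k) denotes the k-th Catalan number and C(a,b) the binomial coefficient (with the convention Cat(k)=0 for k<0). -/
open Polynomial in
private lemma absorb (x : ℚ) (k : ℕ) :
    ((k : ℚ) + 1) * Ring.choose x (k+1) = (x - k) * Ring.choose x k := by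
  have h1 := Ring.descPochhammer_eq_factorial_smul_choose x (k+1)
  have h2 := Ring.descPochhammer_eq_factorial_smul_choose x k
  rw [descPochhammer_succ_right, smeval_mul, smeval_sub, smeval_X, smeval_natCast, h2,
    Nat.factorial_succ] at h1
  have hk : (k.factorial : ℚ) ≠ 0 := by positivity
  apply mul_left_cancel₀ hk
  push_cast [nsmul_eq_mul] at h1 ⊢
  linear_combination -h1

private lemma choose_neg_one (k : ℕ) : Ring.choose (-1 : ℚ) k = (-1) ^ k := by
  induction k with
  | zero => simp [Ring.choose_zero_right]
  | succ k ih =>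
    have h := Ring.choose_succ_succ (-1 : ℚ) k
    rw [neg_add_cancel, Ring.choose_zero_succ, ih] at h
    rw [pow_succ]
    linarith [h]

private def A (n j : ℕ) : ℚ := if j ≤ n then (catalan (n - j) : ℚ) else 0

private def S (m n : ℕ) : ℚ :=
  ∑ j ∈ Finset.range (m / 2 + 1), (-1 : ℚ) ^ j * ((m - j).choose j : ℚ) * A n j

private noncomputable def T (m n : ℕ) : ℚ :=
  if 2 * n < m then Ring.choose ((2 * n : ℚ) - m) n
  else Ring.choose ((2 * n : ℚ) - m) n * (m + 1) / (n + 1)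

private lemma hA (n i : ℕ) : A (n+1) (i+1) = A n i := by
  simp only [A, Nat.add_le_add_iff_right, Nat.succ_sub_succ]

private lemma S_zero (m : ℕ) : S m 0 = 1 := by
  unfold S A
  rw [Finset.sum_eq_single 0]
  · simp
  · intro j _ hj
    rw [if_neg (by omega)]; ring
  · intro h; simp at h

private lemma S_rec (m n : ℕ) : S (m+2) (n+1) = S (m+1) (n+1) - S m n := by
  have key1 : S (m+1) (n+1) = ∑ j ∈ Finset.range (m/2 + 1 + 1),
      (-1:ℚ)^j * (((m+1) - j).choose j : ℚ) * A (n+1) j := by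
    unfold S
    rcases Nat.even_or_odd m with ⟨k, rfl⟩ | ⟨k, rfl⟩
    · have h1 : (k+k+1)/2 + 1 = (k+k)/2 + 1 := by omega
      rw [h1]
      conv_rhs => rw [Finset.sum_range_succ]
      have hz : ((k+k+1) - ((k+k)/2+1)).choose ((k+k)/2+1) = 0 :=
        Nat.choose_eq_zero_of_lt (by omega)
      rw [hz]
      simp
    · have h1 : (2*k+1+1)/2 + 1 = (2*k+1)/2 + 1 + 1 := by omega
      rw [h1]
  have key2 : S (m+2) (n+1) = ∑ j ∈ Finset.range (m/2 + 1 + 1),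
      (-1:ℚ)^j * (((m+2) - j).choose j : ℚ) * A (n+1) j := by
    unfold S
    rw [show (m+2)/2 + 1 = m/2 + 1 + 1 from by omega]
  rw [key1, key2, Finset.sum_range_succ' _ (m/2+1),
    Finset.sum_range_succ' (fun j => (-1:ℚ)^j * (((m+1) - j).choose j : ℚ) * A (n+1) j) (m/2+1)]
  unfold S
  have main : ∀ i ∈ Finset.range (m/2+1),
      (-1:ℚ)^(i+1) * (((m+2) - (i+1)).choose (i+1) : ℚ) * A (n+1) (i+1)
      = (-1:ℚ)^(i+1) * (((m+1) - (i+1)).choose (i+1) : ℚ) * A (n+1) (i+1)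
        - (-1:ℚ)^i * ((m - i).choose i : ℚ) * A n i := by
    intro i hi
    rw [Finset.mem_range] at hi
    have e1 : m + 2 - (i+1) = (m - i) + 1 := by omega
    have e2 : m + 1 - (i+1) = m - i := by omega
    rw [e1, e2, Nat.choose_succ_succ, hA]
    push_cast
    ring
  have hsum : ∑ i ∈ Finset.range (m/2+1),
        (-1:ℚ)^(i+1) * (((m+2) - (i+1)).choose (i+1) : ℚ) * A (n+1) (i+1)
      = (∑ i ∈ Finset.range (m/2+1),
          (-1:ℚ)^(i+1) * (((m+1) - (i+1)).choose (i+1) : ℚ) * A (n+1) (i+1))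
        - ∑ i ∈ Finset.range (m/2+1), (-1:ℚ)^i * ((m - i).choose i : ℚ) * A n i := by
    rw [← Finset.sum_sub_distrib]
    exact Finset.sum_congr rfl main
  simp only [Nat.sub_zero, Nat.choose_zero_right, Nat.cast_one, pow_zero, one_mul, mul_one]
  linear_combination hsum

private lemma T_zero (m : ℕ) : T m 0 = 1 := by
  unfold T
  rcases Nat.eq_zero_or_pos m with h | h
  · subst h; simp [Ring.choose_zero_right]
  · rw [if_pos (by omega), Ring.choose_zero_right]

private lemma T_rec (m n : ℕ) : T (m+2) (n+1) = T (m+1) (n+1) - T m n := by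
  unfold T
  by_cases h : m ≤ 2*n
  · rw [if_neg (by omega), if_neg (by omega), if_neg (by omega)]
    push_cast
    rw [show 2 * ((n:ℚ)+1) - ((m:ℚ)+2) = 2*(n:ℚ) - m from by ring,
      show 2 * ((n:ℚ)+1) - ((m:ℚ)+1) = (2*(n:ℚ) - m) + 1 from by ring]
    have hp := Ring.choose_succ_succ (2*(n:ℚ) - m) n
    have ha := absorb (2*(n:ℚ) - m) n
    have hn2 : ((n:ℚ)+1+1) ≠ 0 := by positivity
    have hn1 : ((n:ℚ)+1) ≠ 0 := by positivity
    rw [hp]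
    field_simp
    linear_combination ha
  · by_cases h2 : m = 2*n+1
    · subst h2
      rw [if_pos (by omega), if_neg (by omega), if_pos (by omega)]
      push_cast
      rw [show 2 * ((n:ℚ)+1) - (2*(n:ℚ)+1+2) = -1 from by ring,
        show 2 * ((n:ℚ)+1) - (2*(n:ℚ)+1+1) = (0:ℚ) from by ring,
        show 2 * (n:ℚ) - (2*(n:ℚ)+1) = -1 from by ring,
        choose_neg_one, choose_neg_one, Ring.choose_zero_succ]
      rw [pow_succ]
      ring
    · rw [if_pos (by omega), if_pos (by omega), if_pos (by omega)]
      push_cast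
      rw [show 2 * ((n:ℚ)+1) - ((m:ℚ)+2) = 2*(n:ℚ) - m from by ring,
        show 2 * ((n:ℚ)+1) - ((m:ℚ)+1) = (2*(n:ℚ) - m) + 1 from by ring]
      have hp := Ring.choose_succ_succ (2*(n:ℚ) - m) n
      linear_combination -hp

private lemma key (m : ℕ) : ∀ n, S m n = T m n := by
  induction m using Nat.twoStepInduction with
  | zero =>
    intro n
    have hS : S 0 n = (catalan n : ℚ) := by
      unfold S A
      simp
    rw [hS]
    unfold T
    rw [if_neg (by omega)]
    have hcast : ((2 * n : ℕ) : ℚ) = 2 * (n:ℚ) := by push_cast; ring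
    rw [show (2 * (n:ℚ)) - ((0:ℕ):ℚ) = ((2*n : ℕ) : ℚ) from by push_cast; ring,
      Ring.choose_natCast]
    have h := succ_mul_catalan_eq_centralBinom n
    unfold Nat.centralBinom at h
    have hn1 : ((n:ℚ)+1) ≠ 0 := by positivity
    field_simp
    have h2 : catalan n * (n+1) = (2*n).choose n := by rw [Nat.mul_comm]; exact h
    simp only [Nat.cast_zero, zero_add, mul_one]
    exact_mod_cast h2
  | one =>
    intro n
    have hS : S 1 n = (catalan n : ℚ) := by
      unfold S A
      simp
    rw [hS]
    unfold T
    rcases Nat.eq_zero_or_pos n with h | h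
    · subst h
      rw [if_pos (by omega)]
      simp [Ring.choose_zero_right]
    · rw [if_neg (by omega)]
      obtain ⟨k, rfl⟩ : ∃ k, n = k+1 := ⟨n-1, by omega⟩
      have hcast : (2 * ((k+1 : ℕ):ℚ)) - ((1:ℕ):ℚ) = ((2*(k+1) - 1 : ℕ) : ℚ) := by
        push_cast [show (1:ℕ) ≤ 2*(k+1) from by omega]
        ring
      rw [hcast, Ring.choose_natCast, show 2*(k+1) - 1 = 2*k+1 from by omega]
      have hcc : (2*k+2).choose (k+1) = 2 * (2*k+1).choose (k+1) := by
        have h1 : (2*k+2).choose (k+1) = (2*k+1).choose k + (2*k+1).choose (k+1) :=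
          Nat.choose_succ_succ _ _
        have h2 : (2*k+1).choose k = (2*k+1).choose (k+1) := by
          have := Nat.choose_symm (n := 2*k+1) (k := k+1) (by omega)
          rw [show 2*k+1 - (k+1) = k from by omega] at this
          exact this
        omega
      have h := succ_mul_catalan_eq_centralBinom (k+1)
      unfold Nat.centralBinom at h
      rw [show 2*(k+1) = 2*k+2 from by omega, hcc] at h
      have hn1 : ((k:ℚ)+1+1) ≠ 0 := by positivity
      push_cast
      field_simp
      have h' : ((k:ℚ)+1+1) * (catalan (k+1) : ℚ) = 2 * ((2*k+1).choose (k+1) : ℚ) := by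
        exact_mod_cast h
      linarith [h']
  | more m ih1 ih2 =>
    intro n
    cases n with
    | zero => rw [S_zero, T_zero]
    | succ n => rw [S_rec, ih2 (n+1), ih1 n, T_rec]

/-- Chu's identity: for all nonnegative integers `m` and `n`,
`∑_{j=0}^{⌊m/2⌋} (-1)^j C(m-j, j) Cat(n-j)` equals `C(2n-m, n)` if `m > 2n` and
`C(2n-m, n) * (m+1)/(n+1)` if `m ≤ 2n`, with the convention `Cat(k) = 0` for `k < 0`
(here `C(2n-m, n)` is the generalized binomial coefficient, possibly with negative top). -/
theorem chu_catalan_identity (m n : ℕ) :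
    ∑ j ∈ Finset.range (m / 2 + 1),
      (-1 : ℚ) ^ j * ((m - j).choose j : ℚ) * (if j ≤ n then (catalan (n - j) : ℚ) else 0) =
    if 2 * n < m then Ring.choose ((2 * n : ℚ) - m) n
    else Ring.choose ((2 * n : ℚ) - m) n * (m + 1) / (n + 1) := by
  have := key m n
  unfold S T A at this
  convert this using 2
end

section
/- Let F_q be a finite field of odd characteristic and χ a multiplicative character on F_q with χ² nontrivial. Then J(χ,χ) = χ̄(4) J(χ, φ), where φ is the unique quadratic character on F_q and J denotes the Jacobi sum. -/
/-- For `F_q` a finite field of odd characteristic and `χ` a multiplicative character on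
`F_q` with `χ²` nontrivial, `J(χ,χ) = χ̄(4) J(χ, φ)`, where `φ` is the quadratic
character. -/
theorem jacobiSum_self (F : Type) [Field F] [Fintype F] [DecidableEq F]
    (hF : ringChar F ≠ 2) (χ : MulChar F ℂ) (hχ : χ ^ 2 ≠ 1) :
    jacobiSum χ χ =
      χ⁻¹ (4 : F) *
        jacobiSum χ ((quadraticChar F).ringHomComp (Int.castRingHom ℂ)) := by
  classical
  set φ := (quadraticChar F).ringHomComp (Int.castRingHom ℂ) with hφ
  have hχ1 : χ ≠ 1 := fun h => hχ (by rw [h, one_pow])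
  have h2 : (2 : F) ≠ 0 := Ring.two_ne_zero hF
  have h4 : (4 : F) ≠ 0 := by
    have : (4 : F) = 2 * 2 := by norm_num
    rw [this]; exact mul_ne_zero h2 h2
  -- Step 1: J(χ,χ) = χ⁻¹(4) * ∑ x, χ (1 - (1 - 2x)^2)
  have step1 : jacobiSum χ χ = χ⁻¹ (4 : F) * ∑ x : F, χ (1 - (1 - 2 * x) ^ 2) := by
    rw [jacobiSum, Finset.mul_sum]
    refine Finset.sum_congr rfl fun x _ => ?_
    rw [← map_mul, MulChar.inv_apply' χ, ← map_mul]
    congr 1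
    field_simp
    ring
  -- Step 2: substitute u = 1 - 2x (bijection)
  have step2 : ∑ x : F, χ (1 - (1 - 2 * x) ^ 2) = ∑ u : F, χ (1 - u ^ 2) := by
    apply Finset.sum_nbij' (fun x => 1 - 2 * x) (fun u => (1 - u) / 2)
    · intro a _; exact Finset.mem_univ _
    · intro a _; exact Finset.mem_univ _
    · intro a _; field_simp; ring
    · intro a _; field_simp; ring
    · intro a _; rfl
  -- Step 3: ∑ u, χ(1-u²) = ∑ t, (φ t + 1) * χ (1 - t)
  have step3 : ∑ u : F, χ (1 - u ^ 2) = ∑ t : F, (φ t + 1) * χ (1 - t) := by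
    rw [← Finset.sum_fiberwise' Finset.univ (fun u : F => u ^ 2) (fun t => χ (1 - t))]
    refine Finset.sum_congr rfl fun t _ => ?_
    rw [Finset.sum_const, nsmul_eq_mul]
    congr 1
    have hcard := quadraticChar_card_sqrts hF t
    have hset : {x : F | x ^ 2 = t}.toFinset = Finset.univ.filter (fun u : F => u ^ 2 = t) := by
      ext x; simp
    rw [hset] at hcard
    have : ((Finset.univ.filter (fun u : F => u ^ 2 = t)).card : ℂ) =
        ((quadraticChar F t : ℤ) : ℂ) + 1 := by
      exact_mod_cast congrArg (fun n : ℤ => (n : ℂ)) hcard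
    rw [this, hφ]
    simp [MulChar.ringHomComp_apply]
  -- Step 4: expand and use ∑ χ = 0
  have hsum0 : ∑ t : F, χ (1 - t) = 0 := by
    have h := (Equiv.subLeft (1 : F)).sum_comp (χ : F → ℂ)
    simp only [Equiv.subLeft_apply] at h
    rw [h]
    exact MulChar.sum_eq_zero_of_ne_one hχ1
  have step4 : ∑ t : F, (φ t + 1) * χ (1 - t) = jacobiSum χ φ := by
    simp_rw [add_mul, one_mul, Finset.sum_add_distrib, hsum0, add_zero]
    rw [jacobiSum_comm]; rfl
  rw [step1, step2, step3, step4]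
end

section
/- Let p > 3 be prime. Then ∑_{λ ∈ F_p^×} H_p({1/6,5/6},{1,1}; λ)² = p² - 3p - 1 if p ≡ 1 (mod 3), and p² - p - 1 if p ≡ 2 (mod 3). In particular, (1/p²) ∑_{λ ∈ F_p} H_p({1/6,5/6},{1,1}; λ)² → 1 as p → ∞. -/
/-- The Gauss sum `g(χ) = ∑_{x ∈ F_p^×} χ(x) ζ_p^x` over the prime field `F_p`. -/
noncomputable def gaussSumP (p : ℕ) (ζ : ℂ) (χ : MulChar (ZMod p) ℂ) : ℂ :=
  ∑ᶠ x : ZMod p, χ x * ζ ^ (ZMod.val x)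

/-- The finite field hypergeometric function `H_p({1/6,5/6},{1,1}; λ)`, given by
`(1/(1-p)) ∑_χ g(χ⁶)g(χ)g(χ̄)²/(g(χ²)g(χ³)) · χ(λ/432)` for `λ ≠ 0`, with the
convention `H_p(0) = 1`. -/
noncomputable def Hp66 (p : ℕ) (ζ : ℂ) (lam : ZMod p) : ℂ :=
  if lam = 0 then 1
  else (1 / (1 - (p : ℂ))) * ∑ᶠ χ : MulChar (ZMod p) ℂ,
    gaussSumP p ζ (χ ^ 6) * gaussSumP p ζ χ * (gaussSumP p ζ χ⁻¹) ^ 2 /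
      (gaussSumP p ζ (χ ^ 2) * gaussSumP p ζ (χ ^ 3)) * χ (lam * Ring.inverse (432 : ZMod p))

section Aux

variable {p : ℕ}

lemma aux_432_ne_zero (hp : p.Prime) (hp3 : 3 < p) : (432 : ZMod p) ≠ 0 := by
  intro h0
  have hd : p ∣ 432 := by
    have : ((432 : ℕ) : ZMod p) = 0 := by exact_mod_cast h0
    exact (ZMod.natCast_eq_zero_iff 432 p).mp this
  have hd' : p ∣ 2 ^ 4 * 3 ^ 3 := by norm_num at hd ⊢; exact hd
  rcases (Nat.Prime.dvd_mul hp).mp hd' with h | h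
  · have := Nat.le_of_dvd (by norm_num) (hp.dvd_of_dvd_pow h); omega
  · have := Nat.le_of_dvd (by norm_num) (hp.dvd_of_dvd_pow h); omega

lemma main_aux (p : ℕ) (hp : p.Prime) (hp3 : 3 < p) (ζ : ℂ) (hζ : IsPrimitiveRoot ζ p) :
    (∑ᶠ (lam : ZMod p) (_ : lam ≠ 0), (Hp66 p ζ lam) ^ 2) =
      if p % 3 = 1 then (p : ℂ) ^ 2 - 3 * p - 1 else (p : ℂ) ^ 2 - p - 1 := by
  classical
  haveI : Fact p.Prime := ⟨hp⟩
  set G := MulChar (ZMod p) ℂ with hG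
  set q : ℂ := (p : ℂ) with hq
  have hq0 : q ≠ 0 := by
    simp only [hq, Ne, Nat.cast_eq_zero]; omega
  have hq1 : q - 1 ≠ 0 := by
    simp only [hq, sub_ne_zero]
    intro h; have : p = 1 := by exact_mod_cast h
    omega
  have hq1' : 1 - q ≠ 0 := fun h => hq1 (by linear_combination -h)
  -- the additive character
  set ψ : AddChar (ZMod p) ℂ := AddChar.zmodChar p hζ.pow_eq_one with hψdef
  have hψ : ψ.IsPrimitive := AddChar.zmodChar_primitive_of_primitive_root p hζ
  have hψ1 : ψ ≠ 1 := by
    have := hψ (a := 1) one_ne_zero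
    rwa [AddChar.mulShift_one] at this
  have gdef : ∀ χ : G, gaussSumP p ζ χ = gaussSum χ ψ := by
    intro χ
    rw [gaussSumP, finsum_eq_sum_of_fintype, gaussSum]
    exact Finset.sum_congr rfl fun x _ => rfl
  have hcardC : ((Fintype.card (ZMod p) : ℂ)) = q := by rw [ZMod.card]
  -- Gauss sum basics
  have gone : gaussSum (1 : G) ψ = -1 := by
    rw [gaussSum]
    have h1 : ∀ a : ZMod p, (1 : G) a * ψ a = ψ a - (if a = 0 then 1 else 0) := by
      intro a
      by_cases ha : a = 0
      · rw [ha, MulChar.map_zero, zero_mul, AddChar.map_zero_eq_one, if_pos rfl]; ring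
      · rw [MulChar.one_apply (isUnit_iff_ne_zero.mpr ha), if_neg ha, one_mul, sub_zero]
    rw [Finset.sum_congr rfl fun a _ => h1 a, Finset.sum_sub_distrib,
      AddChar.sum_eq_zero_iff_ne_zero.mpr hψ1, Finset.sum_ite_eq' Finset.univ (0 : ZMod p)
        (fun _ => (1 : ℂ))]
    simp
  have gne : ∀ χ : G, gaussSum χ ψ ≠ 0 := by
    intro χ
    by_cases h : χ = 1
    · rw [h, gone]; norm_num
    · exact gaussSum_ne_zero_of_nontrivial (by rw [hcardC]; exact hq0) h hψ
  have gpair : ∀ χ : G, χ ≠ 1 → gaussSum χ ψ * gaussSum χ⁻¹ ψ = χ (-1) * q := by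
    intro χ hχ
    have h1 := gaussSum_mul_gaussSum_eq_card hχ hψ
    have h2 := mul_gaussSum_inv_eq_gaussSum χ⁻¹ ψ
    have h3 : χ⁻¹ (-1) = χ (-1) := by
      rw [MulChar.inv_apply' χ (-1), inv_neg_one]
    calc gaussSum χ ψ * gaussSum χ⁻¹ ψ = gaussSum χ ψ * (χ⁻¹ (-1) * gaussSum χ⁻¹ ψ⁻¹) := by
          rw [h2]
      _ = χ⁻¹ (-1) * (gaussSum χ ψ * gaussSum χ⁻¹ ψ⁻¹) := by ring
      _ = χ (-1) * q := by rw [h1, h3, hcardC]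
  -- the multiplier `c`
  set c : ZMod p := Ring.inverse (432 : ZMod p) with hc_def
  have h432 : (432 : ZMod p) ≠ 0 := aux_432_ne_zero hp hp3
  have hc : IsUnit c := by
    rw [hc_def, Ring.inverse_eq_inv]
    exact isUnit_iff_ne_zero.mpr (inv_ne_zero h432)
  -- sum of the trivial character
  have humcard : ∑ lam : ZMod p, (1 : G) lam = q - 1 := by
    have h1 : ∀ lam : ZMod p, (1 : G) lam = 1 - (if lam = 0 then (1 : ℂ) else 0) := by
      intro lam
      by_cases h : lam = 0
      · rw [h, MulChar.map_zero, if_pos rfl]; ring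
      · rw [MulChar.one_apply (isUnit_iff_ne_zero.mpr h), if_neg h]; ring
    rw [Finset.sum_congr rfl fun a _ => h1 a, Finset.sum_sub_distrib, Finset.sum_const,
      Finset.sum_ite_eq' Finset.univ (0 : ZMod p) (fun _ => (1 : ℂ))]
    simp [ZMod.card, hq]
  set t : Finset (ZMod p) := Finset.univ.erase 0 with ht
  -- orthogonality
  have ortho : ∀ χ φ : G, (∑ lam ∈ t, χ (lam * c) * φ (lam * c))
      = if φ = χ⁻¹ then q - 1 else 0 := by
    intro χ φ
    have hsummand : ∀ lam : ZMod p, χ (lam * c) * φ (lam * c) = (χ * φ) lam * (χ * φ) c := by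
      intro lam
      rw [← MulChar.mul_apply, map_mul]
    have h0 : (χ * φ) (0 : ZMod p) * (χ * φ) c = 0 := by rw [MulChar.map_zero, zero_mul]
    have hstep : (∑ lam ∈ t, χ (lam * c) * φ (lam * c))
        = (∑ lam : ZMod p, (χ * φ) lam) * (χ * φ) c := by
      rw [Finset.sum_congr rfl fun lam _ => hsummand lam, ht, Finset.sum_mul]
      exact Finset.sum_erase _ h0
    rw [hstep]
    by_cases hφ : φ = χ⁻¹
    · rw [if_pos hφ, hφ, mul_inv_cancel, humcard, MulChar.one_apply hc, mul_one]
    · have hne : χ * φ ≠ 1 := fun h => hφ ((inv_eq_of_mul_eq_one_right h).symm)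
      rw [MulChar.sum_eq_zero_of_ne_one hne, zero_mul, if_neg hφ]
  -- the coefficient function
  set A : G → ℂ := fun χ => gaussSum (χ ^ 6) ψ * gaussSum χ ψ * gaussSum χ⁻¹ ψ ^ 2 /
      (gaussSum (χ ^ 2) ψ * gaussSum (χ ^ 3) ψ) with hA
  have Hval : ∀ lam : ZMod p, lam ≠ 0 → Hp66 p ζ lam
      = (1 / (1 - q)) * ∑ χ : G, A χ * χ (lam * c) := by
    intro lam hlam
    simp only [Hp66, if_neg hlam, finsum_eq_sum_of_fintype]
    simp only [gdef, hA, ← hc_def, hq]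
    rfl
  -- Gauss sum product values
  have gk1 : ∀ (k : ℕ) (χ : G), χ ^ k = 1 →
      gaussSum (χ ^ k) ψ * gaussSum ((χ ^ k)⁻¹) ψ = 1 := by
    intro k χ h
    rw [h, inv_one, gone]; norm_num
  have gkn : ∀ (k : ℕ), k ≠ 0 → ∀ χ : G, χ ^ k ≠ 1 →
      gaussSum (χ ^ k) ψ * gaussSum ((χ ^ k)⁻¹) ψ = χ (-1) ^ k * q := by
    intro k hk χ h
    rw [gpair _ h, MulChar.pow_apply' χ hk]
  -- evaluation of `A χ * A χ⁻¹`
  have Pval : ∀ χ : G, A χ * A χ⁻¹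
      = if χ = 1 then 1 else if orderOf χ = 6 then q else q ^ 2 := by
    intro χ
    by_cases h1 : χ = 1
    · rw [if_pos h1, h1, hA]
      simp only [one_pow, inv_one, gone]
      norm_num
    rw [if_neg h1]
    have hu : χ (-1) * χ (-1) = 1 := by
      rw [← map_mul, neg_mul_neg, one_mul, map_one]
    have e1 : gaussSum χ ψ * gaussSum χ⁻¹ ψ = χ (-1) * q := gpair χ h1
    have n6 := gne (χ ^ 6); have n1 := gne χ; have n1i := gne χ⁻¹
    have n2 := gne (χ ^ 2); have n3 := gne (χ ^ 3)
    have n6i := gne ((χ ^ 6)⁻¹); have n2i := gne ((χ ^ 2)⁻¹); have n3i := gne ((χ ^ 3)⁻¹)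
    have hAA : A χ * A χ⁻¹ =
        (gaussSum (χ ^ 6) ψ * gaussSum ((χ ^ 6)⁻¹) ψ) *
          (gaussSum χ ψ * gaussSum χ⁻¹ ψ) ^ 3 /
        ((gaussSum (χ ^ 2) ψ * gaussSum ((χ ^ 2)⁻¹) ψ) *
          (gaussSum (χ ^ 3) ψ * gaussSum ((χ ^ 3)⁻¹) ψ)) := by
      simp only [hA, inv_pow, inv_inv]
      field_simp
    rw [hAA]
    by_cases h2 : χ ^ 2 = 1
    · have h3 : χ ^ 3 ≠ 1 := by
        intro h3
        rw [pow_succ, h2, one_mul] at h3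
        exact h1 h3
      have h6 : χ ^ 6 = 1 := by
        rw [show (6 : ℕ) = 2 * 3 by norm_num, pow_mul, h2, one_pow]
      have ho : orderOf χ ≠ 6 := by
        intro h
        have hd := orderOf_dvd_of_pow_eq_one h2
        rw [h] at hd; norm_num at hd
      rw [if_neg ho, gk1 2 χ h2, gk1 6 χ h6, gkn 3 (by norm_num) χ h3, e1]
      rcases mul_self_eq_one_iff.mp hu with hu' | hu' <;> rw [hu'] <;> field_simp <;> ring
    by_cases h3 : χ ^ 3 = 1
    · have h6 : χ ^ 6 = 1 := by
        rw [show (6 : ℕ) = 3 * 2 by norm_num, pow_mul, h3, one_pow]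
      have hu3 : χ (-1) ^ 3 = 1 := by
        rw [← MulChar.pow_apply' χ (by norm_num : (3 : ℕ) ≠ 0), h3,
          MulChar.one_apply isUnit_one.neg]
      have hu1 : χ (-1) = 1 := by
        have h' : χ (-1) ^ 3 = χ (-1) := by
          calc χ (-1) ^ 3 = χ (-1) * (χ (-1) * χ (-1)) := by ring
            _ = χ (-1) := by rw [hu, mul_one]
        rw [h'] at hu3; exact hu3
      have ho : orderOf χ ≠ 6 := by
        intro h
        have hd := orderOf_dvd_of_pow_eq_one h3
        rw [h] at hd; norm_num at hd
      rw [if_neg ho, gk1 3 χ h3, gk1 6 χ h6, gkn 2 (by norm_num) χ h2, e1, hu1]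
      field_simp
    by_cases h6 : χ ^ 6 = 1
    · have ho : orderOf χ = 6 := by
        have hd6 : orderOf χ ∣ 6 := orderOf_dvd_of_pow_eq_one h6
        have hd2 : ¬ orderOf χ ∣ 2 := fun h => h2 (orderOf_dvd_iff_pow_eq_one.mp h)
        have hd3 : ¬ orderOf χ ∣ 3 := fun h => h3 (orderOf_dvd_iff_pow_eq_one.mp h)
        have hle : orderOf χ ≤ 6 := Nat.le_of_dvd (by norm_num) hd6
        interval_cases h : orderOf χ <;> omega
      rw [if_pos ho, gk1 6 χ h6, gkn 2 (by norm_num) χ h2, gkn 3 (by norm_num) χ h3, e1]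
      rcases mul_self_eq_one_iff.mp hu with hu' | hu' <;> rw [hu'] <;> field_simp <;> ring
    · have ho : orderOf χ ≠ 6 := fun h => h6 (h ▸ pow_orderOf_eq_one χ)
      rw [if_neg ho, gkn 6 (by norm_num) χ h6, gkn 2 (by norm_num) χ h2,
        gkn 3 (by norm_num) χ h3, e1]
      rcases mul_self_eq_one_iff.mp hu with hu' | hu' <;> rw [hu'] <;> field_simp <;> ring
  -- reduce the finsum to a Finset sum
  have hfin : (∑ᶠ (lam : ZMod p) (_ : lam ≠ 0), (Hp66 p ζ lam) ^ 2)
      = ∑ lam ∈ t, (Hp66 p ζ lam) ^ 2 := by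
    apply finsum_cond_eq_sum_of_cond_iff
    intro x _
    simp [ht]
  have step1 : (∑ lam ∈ t, (Hp66 p ζ lam) ^ 2)
      = (1 / (1 - q)) ^ 2 * ∑ χ : G, ∑ φ : G, (A χ * A φ) *
          ∑ lam ∈ t, χ (lam * c) * φ (lam * c) := by
    calc (∑ lam ∈ t, (Hp66 p ζ lam) ^ 2)
        = ∑ lam ∈ t, (1 / (1 - q)) ^ 2 *
            ∑ χ : G, ∑ φ : G, (A χ * A φ) * (χ (lam * c) * φ (lam * c)) := by
          refine Finset.sum_congr rfl fun lam hlam => ?_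
          have hlam0 : lam ≠ 0 := (Finset.mem_erase.mp hlam).1
          rw [Hval lam hlam0, mul_pow, sq (∑ χ : G, A χ * χ (lam * c)),
            Finset.sum_mul_sum]
          congr 1
          refine Finset.sum_congr rfl fun χ _ => Finset.sum_congr rfl fun φ _ => ?_
          ring
      _ = (1 / (1 - q)) ^ 2 * ∑ lam ∈ t,
            ∑ χ : G, ∑ φ : G, (A χ * A φ) * (χ (lam * c) * φ (lam * c)) := by
          rw [Finset.mul_sum]
      _ = (1 / (1 - q)) ^ 2 * ∑ χ : G, ∑ φ : G, (A χ * A φ) *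
            ∑ lam ∈ t, χ (lam * c) * φ (lam * c) := by
          congr 1
          rw [Finset.sum_comm]
          refine Finset.sum_congr rfl fun χ _ => ?_
          rw [Finset.sum_comm]
          refine Finset.sum_congr rfl fun φ _ => ?_
          rw [Finset.mul_sum]
  have step2 : (∑ χ : G, ∑ φ : G, (A χ * A φ) * ∑ lam ∈ t, χ (lam * c) * φ (lam * c))
      = (q - 1) * ∑ χ : G, A χ * A χ⁻¹ := by
    rw [Finset.mul_sum]
    refine Finset.sum_congr rfl fun χ _ => ?_
    have hterm : ∀ φ : G, (A χ * A φ) * (∑ lam ∈ t, χ (lam * c) * φ (lam * c))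
        = if φ = χ⁻¹ then A χ * A χ⁻¹ * (q - 1) else 0 := by
      intro φ
      rw [ortho χ φ]
      by_cases h : φ = χ⁻¹
      · rw [if_pos h, if_pos h, h]
      · rw [if_neg h, if_neg h, mul_zero]
    rw [Finset.sum_congr rfl fun φ _ => hterm φ,
      Finset.sum_ite_eq' Finset.univ χ⁻¹ (fun _ => A χ * A χ⁻¹ * (q - 1)),
      if_pos (Finset.mem_univ _)]
    ring
  -- character group facts
  haveI : NeZero ((Monoid.exponent (ZMod p)ˣ : ℂ)) :=
    ⟨by exact_mod_cast Monoid.exponent_ne_zero_of_finite⟩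
  have hGcard : Fintype.card G = p - 1 := by
    have h1 := MulChar.card_eq_card_units_of_hasEnoughRootsOfUnity (ZMod p) ℂ
    rw [Nat.card_eq_fintype_card, Nat.card_eq_fintype_card] at h1
    exact h1.trans (by rw [ZMod.card_units_eq_totient, Nat.totient_prime hp])
  haveI : IsCyclic G := by
    obtain ⟨e⟩ := MulChar.mulEquiv_units (ZMod p) ℂ
    exact isCyclic_of_surjective e.symm.toMonoidHom e.symm.surjective
  have hodd : p % 2 = 1 := Nat.odd_iff.mp (hp.odd_of_ne_two (by omega))
  have hp3' : p % 3 ≠ 0 := by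
    intro h
    have h3 : (3 : ℕ) ∣ p := Nat.dvd_of_mod_eq_zero h
    have := ((Nat.prime_dvd_prime_iff_eq Nat.prime_three hp).mp h3)
    omega
  have hcount : ((Finset.univ.filter (fun χ : G => orderOf χ = 6)).card : ℂ)
      = if p % 3 = 1 then 2 else 0 := by
    by_cases h : p % 3 = 1
    · rw [if_pos h]
      have hdvd : (6 : ℕ) ∣ Fintype.card G := by
        rw [hGcard]; omega
      have htot := IsCyclic.card_orderOf_eq_totient (α := G) hdvd
      rw [show Nat.totient 6 = 2 by decide] at htot
      rw [Finset.filter_congr_decidable] at htot ⊢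
      rw [htot]
      norm_num
    · rw [if_neg h]
      have hempty : (Finset.univ.filter (fun χ : G => orderOf χ = 6)) = ∅ := by
        rw [Finset.filter_eq_empty_iff]
        intro χ _
        intro h6
        have hd : (6 : ℕ) ∣ Fintype.card G := h6 ▸ orderOf_dvd_card
        rw [hGcard] at hd
        omega
      rw [hempty]
      norm_num
  have sumP : (∑ χ : G, A χ * A χ⁻¹)
      = (Fintype.card G : ℂ) * q ^ 2 + (1 - q ^ 2)
        + (if p % 3 = 1 then (2 : ℂ) else 0) * (q - q ^ 2) := by
    have hpt : ∀ χ : G, A χ * A χ⁻¹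
        = q ^ 2 + (if χ = 1 then 1 - q ^ 2 else 0)
          + (if orderOf χ = 6 then q - q ^ 2 else 0) := by
      intro χ
      rw [Pval χ]
      by_cases hx : χ = 1
      · rw [if_pos hx, if_pos hx, hx, if_neg (by rw [orderOf_one]; norm_num)]
        ring
      · rw [if_neg hx, if_neg hx]
        by_cases h6 : orderOf χ = 6
        · rw [if_pos h6, if_pos h6]; ring
        · rw [if_neg h6, if_neg h6]; ring
    rw [Finset.sum_congr rfl fun χ _ => hpt χ, Finset.sum_add_distrib,
      Finset.sum_add_distrib, Finset.sum_const,
      Finset.sum_ite_eq' Finset.univ (1 : G) (fun _ => 1 - q ^ 2),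
      if_pos (Finset.mem_univ _), ← Finset.sum_filter, Finset.sum_const,
      Finset.card_univ, nsmul_eq_mul, nsmul_eq_mul, hcount]
  have hcast : ((Fintype.card G : ℕ) : ℂ) = q - 1 := by
    rw [hGcard, hq, Nat.cast_sub hp.one_le]
    norm_num
  -- final computation
  rw [hfin, step1, step2, sumP, hcast]
  by_cases h : p % 3 = 1
  · rw [if_pos h, if_pos h]
    field_simp
    ring
  · rw [if_neg h, if_neg h]
    field_simp
    ring


end Aux

/-- For `p > 3` prime, `∑_{λ ∈ F_p^×} H_p({1/6,5/6},{1,1}; λ)²` equals `p² - 3p - 1` if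
`p ≡ 1 (mod 3)` and `p² - p - 1` if `p ≡ 2 (mod 3)`; in particular
`(1/p²) ∑_{λ ∈ F_p} H_p({1/6,5/6},{1,1}; λ)² → 1` as `p → ∞` over primes. -/
theorem second_moment_sixth (p : ℕ) :
    (∀ (_ : p.Prime) (_ : 3 < p) (ζ : ℂ), IsPrimitiveRoot ζ p →
      (∑ᶠ (lam : ZMod p) (_ : lam ≠ 0), (Hp66 p ζ lam) ^ 2) =
        if p % 3 = 1 then (p : ℂ) ^ 2 - 3 * p - 1 else (p : ℂ) ^ 2 - p - 1) ∧
    (∀ ε : ℝ, 0 < ε → ∃ N : ℕ, ∀ q : ℕ, N ≤ q → q.Prime →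
      ∀ ζ : ℂ, IsPrimitiveRoot ζ q →
        ‖(1 / (q : ℂ) ^ 2) * (∑ᶠ lam : ZMod q, (Hp66 q ζ lam) ^ 2) - 1‖ < ε) := by
  constructor
  · intro hp hp3 ζ hζ
    exact main_aux p hp hp3 ζ hζ
  · intro ε hε
    refine ⟨max 4 (⌈(3 : ℝ) / ε⌉₊ + 1), fun qn hqn hq ζ hζ => ?_⟩
    classical
    have hq4 : 4 ≤ qn := le_trans (le_max_left _ _) hqn
    have hq3 : 3 < qn := by omega
    have hmain := main_aux qn hq hq3 ζ hζ
    haveI : NeZero qn := ⟨by omega⟩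
    have htot : (∑ᶠ lam : ZMod qn, (Hp66 qn ζ lam) ^ 2)
        = 1 + ∑ᶠ (lam : ZMod qn) (_ : lam ≠ 0), (Hp66 qn ζ lam) ^ 2 := by
      have h2 : (∑ᶠ (lam : ZMod qn) (_ : lam ≠ 0), (Hp66 qn ζ lam) ^ 2)
          = ∑ lam ∈ Finset.univ.erase 0, (Hp66 qn ζ lam) ^ 2 := by
        apply finsum_cond_eq_sum_of_cond_iff
        intro x _
        simp
      rw [finsum_eq_sum_of_fintype, h2,
        ← Finset.add_sum_erase Finset.univ _ (Finset.mem_univ (0 : ZMod qn))]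
      congr 1
      simp [Hp66]
    have hqc : (qn : ℂ) ≠ 0 := by
      simp only [Ne, Nat.cast_eq_zero]; omega
    have hqR : (0 : ℝ) < qn := by exact_mod_cast Nat.pos_of_ne_zero (by omega)
    have hlt : (3 : ℝ) / qn < ε := by
      have h1 : (3 : ℝ) / ε < qn := by
        have h2 : ((3 : ℝ) / ε) ≤ ⌈(3 : ℝ) / ε⌉₊ := Nat.le_ceil _
        have h3 : (⌈(3 : ℝ) / ε⌉₊ + 1 : ℕ) ≤ qn := le_trans (le_max_right _ _) hqn
        have h4 : ((⌈(3 : ℝ) / ε⌉₊ : ℝ) + 1) ≤ qn := by exact_mod_cast h3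
        linarith
      have h5 : (3 : ℝ) < qn * ε := (div_lt_iff₀ hε).mp h1
      rw [div_lt_iff₀ hqR]
      linarith
    rw [htot, hmain]
    by_cases h3 : qn % 3 = 1
    · rw [if_pos h3]
      have heq : (1 / (qn : ℂ) ^ 2) * (1 + ((qn : ℂ) ^ 2 - 3 * qn - 1)) - 1
          = -3 / (qn : ℂ) := by
        field_simp
        ring
      rw [heq]
      rw [norm_div]
      have : ‖(-3 : ℂ)‖ = 3 := by norm_num
      rw [this, Complex.norm_natCast]
      exact hlt
    · rw [if_neg h3]
      have heq : (1 / (qn : ℂ) ^ 2) * (1 + ((qn : ℂ) ^ 2 - qn - 1)) - 1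
          = -1 / (qn : ℂ) := by
        field_simp
        ring
      rw [heq]
      rw [norm_div]
      have : ‖(-1 : ℂ)‖ = 1 := by norm_num
      rw [this, Complex.norm_natCast]
      have h13 : (1 : ℝ) / qn ≤ 3 / qn := by
        gcongr
        norm_num
      linarith [h13]
end

section
/- Let p > 3 be prime and λ ∈ F_p^×. Then H_p({1/2, 1/6, 5/6},{1, 1/3, 2/3}; λ) = ∑_{a ∈ C_λ} φ(a), where φ is the quadratic character of F_p and C_λ = {a ∈ F_p \ {0,1} : (λ-1)a³ + 3a² - 3a + 1 = 0}. -/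
open Finset

section helpers
variable {p : ℕ} [Fact p.Prime]


lemma card_units_aux : ((univ.filter fun u : ZMod p => u ≠ 0).card : ℂ) = (p : ℂ) - 1 := by
  have h1 : (univ.filter fun u : ZMod p => u ≠ 0) = univ \ {0} := by
    ext x; simp
  rw [h1, card_sdiff_of_subset (by simp), card_singleton, card_univ, ZMod.card]
  have hp : 1 ≤ p := (Fact.out : p.Prime).one_lt.le
  push_cast [Nat.cast_sub hp]
  ring

lemma sum_trivChar_eq : ∑ u : ZMod p, (1 : MulChar (ZMod p) ℂ) u = (p : ℂ) - 1 := by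
  classical
  have h : ∀ u : ZMod p, (1 : MulChar (ZMod p) ℂ) u = if u ≠ 0 then 1 else 0 := by
    intro u
    by_cases hu : u = 0
    · simp [hu, MulChar.map_zero _]
    · simp [hu, MulChar.one_apply (isUnit_iff_ne_zero.mpr hu)]
  simp_rw [h]
  rw [Finset.sum_ite, Finset.sum_const, Finset.sum_const_zero, add_zero, nsmul_eq_mul, mul_one]
  exact card_units_aux

lemma gaussSum_one_eq {ψ : AddChar (ZMod p) ℂ} (hψ : ψ.IsPrimitive) :
    gaussSum (1 : MulChar (ZMod p) ℂ) ψ = -1 := by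
  classical
  have hψ1 : ψ ≠ 1 := by
    intro h
    have := hψ (a := 1) one_ne_zero
    rw [h] at this
    exact this (by ext x; simp [AddChar.mulShift_apply])
  have h : ∀ a : ZMod p, (1 : MulChar (ZMod p) ℂ) a * ψ a = ψ a - if a = 0 then 1 else 0 := by
    intro a
    by_cases ha : a = 0
    · simp [ha, MulChar.map_zero _, AddChar.map_zero_eq_one]
    · simp [ha, MulChar.one_apply (isUnit_iff_ne_zero.mpr ha)]
  rw [gaussSum]
  simp_rw [h]
  rw [Finset.sum_sub_distrib, AddChar.sum_eq_zero_of_ne_one hψ1, Finset.sum_ite_eq' univ (0 : ZMod p)]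
  simp

lemma sign_sq (χ : MulChar (ZMod p) ℂ) : χ (-1) * χ (-1) = 1 := by
  rw [← map_mul, neg_mul_neg, one_mul, map_one]

lemma gs_mul_inv {χ : MulChar (ZMod p) ℂ} (hχ : χ ≠ 1) {ψ : AddChar (ZMod p) ℂ}
    (hψ : ψ.IsPrimitive) : gaussSum χ ψ * gaussSum χ⁻¹ ψ = χ (-1) * (p : ℂ) := by
  have h1 : χ⁻¹ (-1) * gaussSum χ⁻¹ ψ⁻¹ = gaussSum χ⁻¹ ψ := mul_gaussSum_inv_eq_gaussSum χ⁻¹ ψ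
  have h2 : gaussSum χ ψ * gaussSum χ⁻¹ ψ⁻¹ = (Fintype.card (ZMod p) : ℂ) :=
    gaussSum_mul_gaussSum_eq_card hχ hψ
  have h3 : χ⁻¹ (-1) = χ (-1) := by
    rw [MulChar.inv_apply', inv_neg_one]
  rw [← h1, h3, ZMod.card] at *
  rw [mul_comm (χ (-1)) _, ← mul_assoc, h2, mul_comm]

lemma card_cast_ne_zero : ((Fintype.card (ZMod p)) : ℂ) ≠ 0 := by
  rw [ZMod.card]
  exact_mod_cast (Fact.out : p.Prime).ne_zero



lemma quadratic_sum {η : MulChar (ZMod p) ℂ} (hη : η ≠ 1) (h2 : η * η = 1) :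
    ∑ x : ZMod p, η (x ^ 2 - x) = -1 := by
  classical
  have key : ∀ x : ZMod p, x ≠ 0 → η (x ^ 2 - x) = η (1 - x⁻¹) := by
    intro x hx
    have hfac : x ^ 2 - x = x ^ 2 * (1 - x⁻¹) := by field_simp
    rw [hfac, map_mul]
    have hsq : η (x ^ 2) = 1 := by
      have h' : η (x ^ 2) = (η * η) x := by rw [MulChar.mul_apply, ← map_mul, sq]
      rw [h', h2, MulChar.one_apply (isUnit_iff_ne_zero.mpr hx)]
    rw [hsq, one_mul]
  rw [Finset.sum_eq_sum_sdiff_singleton_add (mem_univ (0 : ZMod p))]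
  have hz : η ((0 : ZMod p) ^ 2 - 0) = 0 := by
    simpa using MulChar.map_zero η
  rw [hz, add_zero]
  rw [Finset.sum_congr rfl (fun x hx => key x (by simpa using hx))]
  have hbij : ∑ x ∈ univ \ {(0 : ZMod p)}, η (1 - x⁻¹) = ∑ y ∈ univ \ {(1 : ZMod p)}, η y := by
    refine Finset.sum_nbij' (fun x => 1 - x⁻¹) (fun y => (1 - y)⁻¹) ?_ ?_ ?_ ?_ ?_
    · intro x hx
      simp only [mem_sdiff, mem_univ, mem_singleton, true_and] at hx ⊢
      intro h
      apply hx
      have : x⁻¹ = 0 := by linear_combination -h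
      simpa using this
    · intro y hy
      simp only [mem_sdiff, mem_univ, mem_singleton, true_and] at hy ⊢
      exact inv_ne_zero (sub_ne_zero.mpr (Ne.symm hy))
    · intro x hx
      simp only [mem_sdiff, mem_univ, mem_singleton, true_and] at hx
      show (1 - (1 - x⁻¹))⁻¹ = x
      rw [show (1 : ZMod p) - (1 - x⁻¹) = x⁻¹ by ring, inv_inv]
    · intro y hy
      simp only [mem_sdiff, mem_univ, mem_singleton, true_and] at hy
      show 1 - ((1 - y)⁻¹)⁻¹ = y
      rw [inv_inv]
      ring
    · intro x hx; rfl
  rw [hbij]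
  have : ∑ y ∈ univ \ {(1 : ZMod p)}, η y = (∑ y : ZMod p, η y) - η 1 := by
    rw [Finset.sum_eq_sum_sdiff_singleton_add (mem_univ (1 : ZMod p))]
    ring
  rw [this, MulChar.sum_eq_zero_of_ne_one hη, map_one]
  ring

lemma sum_trivChar_quadratic (hp : 3 < p) :
    ∑ x : ZMod p, (1 : MulChar (ZMod p) ℂ) (x ^ 2 - x) = (p : ℂ) - 2 := by
  classical
  have h : ∀ x : ZMod p, (1 : MulChar (ZMod p) ℂ) (x ^ 2 - x)
      = if x ≠ 0 ∧ x ≠ 1 then 1 else 0 := by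
    intro x
    have hfac : x ^ 2 - x = x * (x - 1) := by ring
    by_cases hx : x ≠ 0 ∧ x ≠ 1
    · rw [if_pos hx, MulChar.one_apply]
      rw [hfac]
      exact (isUnit_iff_ne_zero.mpr (mul_ne_zero hx.1 (sub_ne_zero.mpr hx.2)))
    · rw [if_neg hx]
      push_neg at hx
      by_cases h0 : x = 0
      · rw [h0]; simpa using MulChar.map_zero (1 : MulChar (ZMod p) ℂ)
      · rw [hx h0]; simpa using MulChar.map_zero (1 : MulChar (ZMod p) ℂ)
  simp_rw [h]
  rw [Finset.sum_ite, Finset.sum_const, Finset.sum_const_zero, add_zero, nsmul_eq_mul, mul_one]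
  have h01 : (0 : ZMod p) ≠ 1 := by
    have : Nontrivial (ZMod p) := ⟨⟨0, 1, zero_ne_one⟩⟩
    exact zero_ne_one
  have hset : (univ.filter fun x : ZMod p => x ≠ 0 ∧ x ≠ 1) = univ \ {0, 1} := by
    ext x; simp [not_or]
  rw [hset, card_sdiff_of_subset (by simp), card_univ, ZMod.card]
  rw [card_insert_of_notMem (by simpa using h01), card_singleton]
  have hp2 : 2 ≤ p := by omega
  push_cast [Nat.cast_sub hp2]
  ring


lemma lemA {ψ : AddChar (ZMod p) ℂ} (hψ : ψ.IsPrimitive) (hp : 3 < p)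
    (χ : MulChar (ZMod p) ℂ) (t : ZMod p) :
    gaussSum (χ ^ 6) ψ * gaussSum ((χ ^ 3)⁻¹) ψ / gaussSum (χ ^ 3) ψ * χ t
      = (∑ x : ZMod p, (χ ^ 3)⁻¹ (x ^ 2 - x)) * χ t
        - (if χ ^ 3 = 1 then ((p : ℂ) - 1) * χ t else 0) := by
  classical
  have h63 : χ ^ 6 = (χ ^ 3) * (χ ^ 3) := by rw [← pow_add]
  by_cases h3 : χ ^ 3 = 1
  · have h6 : χ ^ 6 = 1 := by rw [h63, h3, one_mul]
    rw [if_pos h3, h3, h6, inv_one, gaussSum_one_eq hψ, sum_trivChar_quadratic hp]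
    norm_num
    ring
  · rw [if_neg h3]
    have hg3 : gaussSum (χ ^ 3) ψ ≠ 0 :=
      gaussSum_ne_zero_of_nontrivial card_cast_ne_zero h3 hψ
    by_cases h6 : χ ^ 6 = 1
    · have hinv : (χ ^ 3)⁻¹ = χ ^ 3 := by
        rw [eq_comm, eq_inv_iff_mul_eq_one, ← h63, h6]
      have hqs : ∑ x : ZMod p, (χ ^ 3) (x ^ 2 - x) = -1 :=
        quadratic_sum h3 (by rw [← h63, h6])
      rw [h6, hinv, gaussSum_one_eq hψ, hqs, mul_div_assoc, div_self hg3]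
      ring
    · -- generic case
      set A := (χ ^ 3)⁻¹ with hA
      have hAne : A ≠ 1 := by
        rw [hA, ne_eq, inv_eq_one]
        exact h3
      have hAA : A * A = (χ ^ 6)⁻¹ := by rw [hA, ← mul_inv, ← h63]
      have hAAne : A * A ≠ 1 := by
        rw [hAA, ne_eq, inv_eq_one]
        exact h6
      have h6inv : (χ ^ 6)⁻¹ ≠ 1 := by rw [ne_eq, inv_eq_one]; exact h6
      have hgA : gaussSum A ψ ≠ 0 :=
        gaussSum_ne_zero_of_nontrivial card_cast_ne_zero hAne hψ
      have hg6 : gaussSum (χ ^ 6) ψ ≠ 0 :=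
        gaussSum_ne_zero_of_nontrivial card_cast_ne_zero h6 hψ
      have jac : gaussSum (χ ^ 6)⁻¹ ψ * jacobiSum A A = gaussSum A ψ * gaussSum A ψ := by
        rw [← hAA]
        exact jacobiSum_mul_nontrivial hAAne ψ
      have e3 : gaussSum (χ ^ 3) ψ * gaussSum A ψ = (χ ^ 3) (-1) * (p : ℂ) :=
        gs_mul_inv h3 hψ
      have e6 : gaussSum (χ ^ 6) ψ * gaussSum (χ ^ 6)⁻¹ ψ = (p : ℂ) := by
        have hs : (χ ^ 6) (-1) = 1 := by
          rw [h63, MulChar.mul_apply, sign_sq]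
        rw [gs_mul_inv h6 hψ, hs, one_mul]
      have hsign : (χ ^ 3) (-1) * (χ ^ 3) (-1) = 1 := sign_sq _
      -- the sum equals A(-1) * jacobiSum A A
      have hsum : ∑ x : ZMod p, A (x ^ 2 - x) = A (-1) * jacobiSum A A := by
        rw [jacobiSum, Finset.mul_sum]
        refine Finset.sum_congr rfl fun x _ => ?_
        rw [← mul_assoc, ← map_mul, ← map_mul]
        congr 1
        ring
      have hAm1 : A (-1) = (χ ^ 3) (-1) := by
        rw [hA, MulChar.inv_apply', inv_neg_one]
      rw [hsum, hAm1]
      have key : gaussSum (χ ^ 6) ψ * gaussSum A ψ / gaussSum (χ ^ 3) ψ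
          = (χ ^ 3) (-1) * jacobiSum A A := by
        rw [div_eq_iff hg3]
        apply mul_right_cancel₀ hgA
        calc gaussSum (χ ^ 6) ψ * gaussSum A ψ * gaussSum A ψ
            = jacobiSum A A * (p : ℂ) := by
              rw [mul_assoc, ← jac, ← mul_assoc, e6, mul_comm]
          _ = (χ ^ 3) (-1) * jacobiSum A A * ((χ ^ 3) (-1) * (p : ℂ)) := by
              linear_combination (-(jacobiSum A A * (p : ℂ))) * hsign
          _ = (χ ^ 3) (-1) * jacobiSum A A * gaussSum (χ ^ 3) ψ * gaussSum A ψ := by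
              rw [mul_assoc _ _ (gaussSum A ψ), e3]
      rw [key]
      ring

noncomputable instance : Fintype (MulChar (ZMod p) ℂ) := DirichletCharacter.fintype

lemma orth (v : ZMod p) :
    ∑ χ : MulChar (ZMod p) ℂ, χ v = if v = 1 then (p : ℂ) - 1 else 0 := by
  have h : ∑ χ : MulChar (ZMod p) ℂ, χ v = if v = 1 then (p.totient : ℂ) else 0 :=
    DirichletCharacter.sum_characters_eq ℂ v
  rw [h, Nat.totient_prime Fact.out]
  have hp1 : 1 ≤ p := (Fact.out : p.Prime).one_lt.le
  split_ifs
  · push_cast [Nat.cast_sub hp1]; ring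
  · rfl

lemma inner_orth {t : ZMod p} (ht : t ≠ 0) (x : ZMod p) :
    ∑ χ : MulChar (ZMod p) ℂ, (χ ^ 3)⁻¹ (x ^ 2 - x) * χ t
      = if (x ^ 2 - x) ^ 3 = t then (p : ℂ) - 1 else 0 := by
  classical
  by_cases hu0 : x ^ 2 - x = 0
  · rw [hu0, if_neg (by rw [zero_pow (by norm_num)]; exact fun h => ht h.symm)]
    refine Finset.sum_eq_zero fun χ _ => ?_
    rw [MulChar.map_zero, zero_mul]
  · have hterm : ∀ χ : MulChar (ZMod p) ℂ,
        (χ ^ 3)⁻¹ (x ^ 2 - x) * χ t = χ (((x ^ 2 - x)⁻¹) ^ 3 * t) := by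
      intro χ
      rw [MulChar.inv_apply', MulChar.pow_apply' χ (by norm_num), ← map_pow, ← map_mul]
    simp_rw [hterm]
    rw [orth]
    have hiff : (((x ^ 2 - x)⁻¹) ^ 3 * t = 1) ↔ ((x ^ 2 - x) ^ 3 = t) := by
      rw [inv_pow, inv_mul_eq_one₀ (pow_ne_zero _ hu0), eq_comm]
    exact if_congr hiff rfl rfl

lemma cube_count {t : ZMod p} (ht : t ≠ 0) :
    ((p : ℂ) - 1) * ∑ χ ∈ univ.filter (fun χ : MulChar (ZMod p) ℂ => χ ^ 3 = 1), χ t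
      = ((p : ℂ) - 1) * ((univ.filter fun u : ZMod p => u ^ 3 = t).card : ℂ) := by
  classical
  have E1 : ∑ u : ZMod p, ∑ χ : MulChar (ZMod p) ℂ, χ (u ^ 3 * t⁻¹)
      = ((p : ℂ) - 1) * ((univ.filter fun u : ZMod p => u ^ 3 = t).card : ℂ) := by
    have h : ∀ u : ZMod p, ∑ χ : MulChar (ZMod p) ℂ, χ (u ^ 3 * t⁻¹)
        = if u ^ 3 = t then (p : ℂ) - 1 else 0 := by
      intro u
      rw [orth]
      exact if_congr (mul_inv_eq_one₀ ht) rfl rfl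
    simp_rw [h]
    rw [Finset.sum_ite, Finset.sum_const, Finset.sum_const_zero, add_zero, nsmul_eq_mul]
    ring
  have E2 : ∑ u : ZMod p, ∑ χ : MulChar (ZMod p) ℂ, χ (u ^ 3 * t⁻¹)
      = ((p : ℂ) - 1)
        * ∑ χ ∈ univ.filter (fun χ : MulChar (ZMod p) ℂ => χ ^ 3 = 1), χ t⁻¹ := by
    rw [Finset.sum_comm]
    have hper : ∀ χ : MulChar (ZMod p) ℂ, ∑ u : ZMod p, χ (u ^ 3 * t⁻¹)
        = (if χ ^ 3 = 1 then (p : ℂ) - 1 else 0) * χ t⁻¹ := by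
      intro χ
      have h : ∀ u : ZMod p, χ (u ^ 3 * t⁻¹) = (χ ^ 3) u * χ t⁻¹ := by
        intro u
        rw [map_mul, MulChar.pow_apply' χ (by norm_num), map_pow]
      simp_rw [h, ← Finset.sum_mul]
      congr 1
      by_cases h3 : χ ^ 3 = 1
      · rw [if_pos h3, h3, sum_trivChar_eq]
      · rw [if_neg h3, MulChar.sum_eq_zero_of_ne_one h3]
    simp_rw [hper, ite_mul, zero_mul]
    rw [Finset.sum_ite, Finset.sum_const_zero, add_zero, ← Finset.mul_sum]
  have hswap : ∑ χ ∈ univ.filter (fun χ : MulChar (ZMod p) ℂ => χ ^ 3 = 1), χ t⁻¹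
      = ∑ χ ∈ univ.filter (fun χ : MulChar (ZMod p) ℂ => χ ^ 3 = 1), χ t := by
    refine Finset.sum_nbij' (fun χ => χ⁻¹) (fun χ => χ⁻¹) ?_ ?_ ?_ ?_ ?_
    · intro χ hχ
      simp only [mem_filter, mem_univ, true_and] at hχ ⊢
      rw [inv_pow, hχ, inv_one]
    · intro χ hχ
      simp only [mem_filter, mem_univ, true_and] at hχ ⊢
      rw [inv_pow, hχ, inv_one]
    · intro χ _; simp
    · intro χ _; simp
    · intro χ _
      show χ t⁻¹ = χ⁻¹ t
      rw [MulChar.inv_apply']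
  rw [← E1, E2, hswap]

lemma sumT {ψ : AddChar (ZMod p) ℂ} (hψ : ψ.IsPrimitive) (hp : 3 < p)
    {t : ZMod p} (ht : t ≠ 0) :
    ∑ χ : MulChar (ZMod p) ℂ,
        gaussSum (χ ^ 6) ψ * gaussSum ((χ ^ 3)⁻¹) ψ / gaussSum (χ ^ 3) ψ * χ t
      = ((p : ℂ) - 1) * ((univ.filter fun x : ZMod p => (x ^ 2 - x) ^ 3 = t).card : ℂ)
        - ((p : ℂ) - 1) * ((univ.filter fun u : ZMod p => u ^ 3 = t).card : ℂ) := by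
  classical
  rw [Finset.sum_congr rfl (fun χ _ => lemA hψ hp χ t), Finset.sum_sub_distrib]
  congr 1
  · simp_rw [Finset.sum_mul]
    rw [Finset.sum_comm]
    rw [Finset.sum_congr rfl (fun x _ => inner_orth ht x)]
    rw [Finset.sum_ite, Finset.sum_const, Finset.sum_const_zero, add_zero, nsmul_eq_mul]
    ring
  · rw [← cube_count ht, Finset.sum_ite, Finset.sum_const_zero, add_zero, ← Finset.mul_sum]

lemma zmodTwoNeZero (hp : 3 < p) : (2 : ZMod p) ≠ 0 := by
  intro h
  have h2 : ((2 : ℕ) : ZMod p) = 0 := by exact_mod_cast h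
  rw [ZMod.natCast_eq_zero_iff] at h2
  have := Nat.le_of_dvd (by norm_num) h2
  omega

lemma zmodFourNeZero (hp : 3 < p) : (4 : ZMod p) ≠ 0 := by
  have h := zmodTwoNeZero hp
  intro h4
  apply h
  have : (4 : ZMod p) = 2 * 2 := by norm_num
  rw [this] at h4
  rcases mul_eq_zero.mp h4 with h' | h' <;> exact h'

lemma zmodSixtyFourNeZero (hp : 3 < p) : (64 : ZMod p) ≠ 0 := by
  have h := zmodTwoNeZero hp
  intro h64
  apply h
  have : (64 : ZMod p) = 2 ^ 6 := by norm_num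
  rw [this] at h64
  exact pow_eq_zero_iff (by norm_num) |>.mp h64

lemma quadChar_inv {a : ZMod p} (ha : a ≠ 0) :
    quadraticChar (ZMod p) a⁻¹ = quadraticChar (ZMod p) a := by
  have h1 : quadraticChar (ZMod p) a * quadraticChar (ZMod p) a⁻¹ = 1 := by
    rw [← map_mul, mul_inv_cancel₀ ha, map_one]
  have hsq : quadraticChar (ZMod p) a ^ 2 = 1 := quadraticChar_sq_one ha
  linear_combination (-(quadraticChar (ZMod p) a⁻¹ : ℤ)) * hsq
    + (quadraticChar (ZMod p) a : ℤ) * h1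

lemma count_quad (hp : 3 < p) (s : ZMod p) :
    (((univ.filter fun x : ZMod p => x ^ 2 - x = s).card : ℤ))
      = quadraticChar (ZMod p) (1 + 4 * s) + 1 := by
  classical
  have h2 : (2 : ZMod p) ≠ 0 := zmodTwoNeZero hp
  have hcard : (univ.filter fun x : ZMod p => x ^ 2 - x = s).card
      = (univ.filter fun y : ZMod p => y ^ 2 = 1 + 4 * s).card := by
    refine Finset.card_nbij' (fun x => 2 * x - 1) (fun y => (y + 1) / 2) ?_ ?_ ?_ ?_
    · intro x hx
      simp only [coe_filter, mem_filter, mem_univ, true_and, Set.mem_setOf_eq] at hx ⊢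
      linear_combination 4 * hx
    · intro y hy
      simp only [coe_filter, mem_filter, mem_univ, true_and, Set.mem_setOf_eq] at hy ⊢
      field_simp
      linear_combination hy
    · intro x hx
      show (2 * x - 1 + 1) / 2 = x
      field_simp
      ring
    · intro y hy
      show 2 * ((y + 1) / 2) - 1 = y
      field_simp
      ring
  rw [hcard]
  have hchar : ringChar (ZMod p) ≠ 2 := by
    rw [ZMod.ringChar_zmod_n]
    omega
  have hq := quadraticChar_card_sqrts hchar (1 + 4 * s)
  rw [← hq]
  congr 1
  simp [Set.toFinset_setOf]

lemma key_int (hp : 3 < p) {lam : ZMod p} (hlam : lam ≠ 0) :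
    ((univ.filter fun x : ZMod p => (x ^ 2 - x) ^ 3 = -lam / 64).card : ℤ)
      - ((univ.filter fun u : ZMod p => u ^ 3 = -lam / 64).card : ℤ)
      = ∑ a ∈ univ.filter
          (fun a : ZMod p => a ≠ 0 ∧ a ≠ 1 ∧ (lam - 1) * a ^ 3 + 3 * a ^ 2 - 3 * a + 1 = 0),
        quadraticChar (ZMod p) a := by
  classical
  have h2 : (2 : ZMod p) ≠ 0 := zmodTwoNeZero hp
  have h4 : (4 : ZMod p) ≠ 0 := zmodFourNeZero hp
  have h64 : (64 : ZMod p) ≠ 0 := zmodSixtyFourNeZero hp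
  set t : ZMod p := -lam / 64 with htdef
  have ht : t ≠ 0 := div_ne_zero (neg_ne_zero.mpr hlam) h64
  -- fiberwise decomposition
  have hN : (univ.filter fun x : ZMod p => (x ^ 2 - x) ^ 3 = t).card
      = ∑ s ∈ univ.filter (fun u : ZMod p => u ^ 3 = t),
          (univ.filter fun x : ZMod p => x ^ 2 - x = s).card := by
    rw [Finset.card_eq_sum_card_fiberwise
      (f := fun x : ZMod p => x ^ 2 - x)
      (t := univ.filter (fun u : ZMod p => u ^ 3 = t))
      (fun x hx => by
        simp only [coe_filter, mem_filter, mem_univ, true_and, Set.mem_setOf_eq] at hx ⊢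
        exact hx)]
    refine Finset.sum_congr rfl fun s hs => ?_
    simp only [mem_filter, mem_univ, true_and] at hs
    congr 1
    ext x
    simp only [mem_filter, mem_univ, true_and]
    constructor
    · rintro ⟨-, h⟩; exact h
    · intro h; exact ⟨by rw [h, hs], h⟩
  have hsum : ((univ.filter fun x : ZMod p => (x ^ 2 - x) ^ 3 = t).card : ℤ)
      = (∑ s ∈ univ.filter (fun u : ZMod p => u ^ 3 = t),
          quadraticChar (ZMod p) (1 + 4 * s))
        + ((univ.filter fun u : ZMod p => u ^ 3 = t).card : ℤ) := by
    rw [hN]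
    push_cast
    rw [Finset.sum_congr rfl fun s _ => count_quad hp s, Finset.sum_add_distrib]
    simp
  -- now: ∑_{s : s^3 = t} quadraticChar (1+4s) = ∑_{a ∈ C} quadraticChar a
  have hrestrict : ∑ s ∈ univ.filter (fun u : ZMod p => u ^ 3 = t),
      quadraticChar (ZMod p) (1 + 4 * s)
      = ∑ s ∈ (univ.filter (fun u : ZMod p => u ^ 3 = t)).filter
          (fun s => 1 + 4 * s ≠ 0), quadraticChar (ZMod p) (1 + 4 * s) := by
    refine (Finset.sum_filter_of_ne ?_).symm
    intro s _ hne hzero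
    exact hne (by rw [hzero]; exact quadraticChar_zero)
  have hbij : ∑ s ∈ (univ.filter (fun u : ZMod p => u ^ 3 = t)).filter
        (fun s => 1 + 4 * s ≠ 0), quadraticChar (ZMod p) (1 + 4 * s)
      = ∑ a ∈ univ.filter
          (fun a : ZMod p => a ≠ 0 ∧ a ≠ 1 ∧ (lam - 1) * a ^ 3 + 3 * a ^ 2 - 3 * a + 1 = 0),
        quadraticChar (ZMod p) a := by
    refine Finset.sum_nbij' (fun s => (1 + 4 * s)⁻¹) (fun a => (a⁻¹ - 1) / 4) ?_ ?_ ?_ ?_ ?_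
    · intro s hs
      simp only [mem_filter, mem_univ, true_and] at hs ⊢
      obtain ⟨hs3, h1s⟩ := hs
      have hs0 : s ≠ 0 := by
        intro h
        rw [h] at hs3
        simp at hs3
        exact ht hs3.symm
      have hs64 : 64 * s ^ 3 = -lam := by
        rw [hs3, htdef]
        field_simp
      refine ⟨inv_ne_zero h1s, ?_, ?_⟩
      · intro h
        have : (1 + 4 * s) = 1 := by
          rw [← inv_inv (1 + 4 * s), h, inv_one]
        have h4s : 4 * s = 0 := by linear_combination this
        rcases mul_eq_zero.mp h4s with h' | h'
        · exact h4 h'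
        · exact hs0 h'
      · field_simp
        linear_combination hs64
    · intro a ha
      simp only [mem_filter, mem_univ, true_and] at ha ⊢
      obtain ⟨ha0, ha1, hacube⟩ := ha
      have hainv : a⁻¹ ≠ 0 := inv_ne_zero ha0
      have h14 : 1 + 4 * ((a⁻¹ - 1) / 4) = a⁻¹ := by field_simp; try ring
      constructor
      · rw [htdef]
        field_simp
        linear_combination (64 : ZMod p) * hacube
      · rw [h14]; exact hainv
    · intro s hs
      simp only [mem_filter, mem_univ, true_and] at hs
      show ((1 + 4 * s)⁻¹⁻¹ - 1) / 4 = s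
      rw [inv_inv]
      field_simp
      ring
    · intro a ha
      simp only [mem_filter, mem_univ, true_and] at ha
      show (1 + 4 * ((a⁻¹ - 1) / 4))⁻¹ = a
      have h14 : 1 + 4 * ((a⁻¹ - 1) / 4) = a⁻¹ := by field_simp; try ring
      rw [h14, inv_inv]
    · intro s hs
      simp only [mem_filter, mem_univ, true_and] at hs
      rw [← quadChar_inv hs.2]
  rw [hsum, hrestrict, hbij]
  ring

end helpers




/-- For `p > 3` prime and `λ ∈ F_p^×`, the finite field hypergeometric function
`H_p({1/2,1/6,5/6},{1,1/3,2/3}; λ)`, given (after Hasse–Davenport reduction) by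
`(1/(p-1)) ∑_χ g(χ⁶)g(χ̄³)/g(χ³) · χ(-λ/64)`, equals `∑_{a ∈ C_λ} φ(a)`, where
`C_λ = {a ∈ F_p \ {0,1} : (λ-1)a³ + 3a² - 3a + 1 = 0}` and `φ` is the quadratic
character of `F_p`. -/
theorem hypergeometric_2_6_4_algebraic (p : ℕ) [Fact p.Prime] (hp : 3 < p)
    (ζ : ℂ) (hζ : IsPrimitiveRoot ζ p) (lam : ZMod p) (hlam : lam ≠ 0) :
    (1 / ((p : ℂ) - 1)) * ∑ᶠ χ : MulChar (ZMod p) ℂ,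
        gaussSumP p ζ (χ ^ 6) * gaussSumP p ζ ((χ ^ 3)⁻¹) / gaussSumP p ζ (χ ^ 3) *
          χ (-lam / (64 : ZMod p)) =
      ∑ a ∈ Finset.univ.filter
          (fun a : ZMod p => a ≠ 0 ∧ a ≠ 1 ∧ (lam - 1) * a ^ 3 + 3 * a ^ 2 - 3 * a + 1 = 0),
        ((quadraticChar (ZMod p)).ringHomComp (Int.castRingHom ℂ)) a := by
  classical
  haveI : NeZero p := ⟨(Fact.out : p.Prime).ne_zero⟩
  have hζ1 : ζ ^ p = 1 := hζ.pow_eq_one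
  let ψ : AddChar (ZMod p) ℂ := AddChar.zmodChar p hζ1
  have hψ : ψ.IsPrimitive := AddChar.zmodChar_primitive_of_primitive_root p hζ
  have hgp : ∀ χ : MulChar (ZMod p) ℂ, gaussSumP p ζ χ = gaussSum χ ψ := by
    intro χ
    rw [gaussSumP, gaussSum, finsum_eq_sum_of_fintype]
    exact Finset.sum_congr rfl fun x _ => by
      rw [show ψ x = ζ ^ x.val from AddChar.zmodChar_apply hζ1 x]
  have ht : -lam / (64 : ZMod p) ≠ 0 :=
    div_ne_zero (neg_ne_zero.mpr hlam) (zmodSixtyFourNeZero hp)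
  rw [finsum_eq_sum_of_fintype]
  have hstep : ∑ χ : MulChar (ZMod p) ℂ,
      gaussSumP p ζ (χ ^ 6) * gaussSumP p ζ ((χ ^ 3)⁻¹) / gaussSumP p ζ (χ ^ 3) *
        χ (-lam / (64 : ZMod p))
      = ((p : ℂ) - 1)
          * ((univ.filter fun x : ZMod p => (x ^ 2 - x) ^ 3 = -lam / 64).card : ℂ)
        - ((p : ℂ) - 1)
          * ((univ.filter fun u : ZMod p => u ^ 3 = -lam / 64).card : ℂ) := by
    rw [Finset.sum_congr rfl fun χ _ => by rw [hgp, hgp, hgp]]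
    exact sumT hψ hp ht
  rw [hstep]
  have hp1 : (p : ℂ) - 1 ≠ 0 := by
    have h' : (p : ℂ) ≠ 1 := by exact_mod_cast (by omega : p ≠ 1)
    exact sub_ne_zero.mpr h'
  rw [show (1 / ((p : ℂ) - 1))
      * (((p : ℂ) - 1)
          * ((univ.filter fun x : ZMod p => (x ^ 2 - x) ^ 3 = -lam / 64).card : ℂ)
        - ((p : ℂ) - 1)
          * ((univ.filter fun u : ZMod p => u ^ 3 = -lam / 64).card : ℂ))
      = ((univ.filter fun x : ZMod p => (x ^ 2 - x) ^ 3 = -lam / 64).card : ℂ)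
        - ((univ.filter fun u : ZMod p => u ^ 3 = -lam / 64).card : ℂ) from by
    field_simp]
  have hkey := key_int hp hlam
  have hcast : ((univ.filter fun x : ZMod p => (x ^ 2 - x) ^ 3 = -lam / 64).card : ℂ)
      - ((univ.filter fun u : ZMod p => u ^ 3 = -lam / 64).card : ℂ)
      = ∑ a ∈ univ.filter
          (fun a : ZMod p => a ≠ 0 ∧ a ≠ 1 ∧ (lam - 1) * a ^ 3 + 3 * a ^ 2 - 3 * a + 1 = 0),
        ((quadraticChar (ZMod p) a : ℤ) : ℂ) := by
    have h' := congrArg (fun z : ℤ => (z : ℂ)) hkey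
    push_cast at h'
    exact h'
  rw [hcast]
  exact Finset.sum_congr rfl fun a _ => by
    rw [MulChar.ringHomComp_apply]
    simp
end
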